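/- For the 10×10 matrix S of the quantum double of the 2D2 subfactor, every entry of row 1 of S is nonzero, and for all indices i, j, k ∈ {1,…,10} the Verlinde number ∑_{r=1}^{10} S_{i r}·S_{j r}·conj(S_{k r}) / S_{1 r} is a nonnegative integer. -/

import Mathlib

open Complex Matrix

noncomputable section

/-- The 10×10 S-matrix of the quantum double of the 2D2 subfactor of index `3+√5`. -/
def S2D2 : Matrix (Fin 10) (Fin 10) ℂ := (20 : ℂ)⁻¹ •
  !![5 - 2 * (Real.sqrt 5 : ℂ), 5 + 2 * (Real.sqrt 5 : ℂ), 5, 5, 5, 5, 5, 5,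
       4 * (Real.sqrt 5 : ℂ), 4 * (Real.sqrt 5 : ℂ);
     5 + 2 * (Real.sqrt 5 : ℂ), 5 - 2 * (Real.sqrt 5 : ℂ), 5, 5, 5, 5, 5, 5,
       -(4 * (Real.sqrt 5 : ℂ)), -(4 * (Real.sqrt 5 : ℂ));
     5, 5, 15, -5, -5, -5, -5, -5, 0, 0;
     5, 5, -5, 15, -5, -5, -5, -5, 0, 0;
     5, 5, -5, -5, -5 + 10 * I, -5 - 10 * I, 5, 5, 0, 0;
     5, 5, -5, -5, -5 - 10 * I, -5 + 10 * I, 5, 5, 0, 0;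
     5, 5, -5, -5, 5, 5, -5 - 10 * I, -5 + 10 * I, 0, 0;
     5, 5, -5, -5, 5, 5, -5 + 10 * I, -5 - 10 * I, 0, 0;
     4 * (Real.sqrt 5 : ℂ), -(4 * (Real.sqrt 5 : ℂ)), 0, 0, 0, 0, 0, 0,
       -10 + 2 * (Real.sqrt 5 : ℂ), 10 + 2 * (Real.sqrt 5 : ℂ);
     4 * (Real.sqrt 5 : ℂ), -(4 * (Real.sqrt 5 : ℂ)), 0, 0, 0, 0, 0, 0,
       10 + 2 * (Real.sqrt 5 : ℂ), -10 + 2 * (Real.sqrt 5 : ℂ)]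

/-! Auxiliary: arithmetic in `ℤ[√5, i]` represented by quadruples of integers. -/

structure K where
  a : ℤ
  b : ℤ
  c : ℤ
  d : ℤ
deriving DecidableEq

def Kmul (x y : K) : K :=
  ⟨x.a*y.a + 5*x.b*y.b - x.c*y.c - 5*x.d*y.d,
   x.a*y.b + x.b*y.a - x.c*y.d - x.d*y.c,
   x.a*y.c + x.c*y.a + 5*(x.b*y.d + x.d*y.b),
   x.a*y.d + x.d*y.a + x.b*y.c + x.c*y.b⟩

def Kadd (x y : K) : K := ⟨x.a+y.a, x.b+y.b, x.c+y.c, x.d+y.d⟩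

def Kconj (x : K) : K := ⟨x.a, x.b, -x.c, -x.d⟩

/-- Integer version of `20 • S2D2`. -/
def M : Fin 10 → Fin 10 → K :=
  ![![⟨5,-2,0,0⟩, ⟨5,2,0,0⟩, ⟨5,0,0,0⟩, ⟨5,0,0,0⟩, ⟨5,0,0,0⟩, ⟨5,0,0,0⟩, ⟨5,0,0,0⟩, ⟨5,0,0,0⟩, ⟨0,4,0,0⟩, ⟨0,4,0,0⟩],
    ![⟨5,2,0,0⟩, ⟨5,-2,0,0⟩, ⟨5,0,0,0⟩, ⟨5,0,0,0⟩, ⟨5,0,0,0⟩, ⟨5,0,0,0⟩, ⟨5,0,0,0⟩, ⟨5,0,0,0⟩, ⟨0,-4,0,0⟩, ⟨0,-4,0,0⟩],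
    ![⟨5,0,0,0⟩, ⟨5,0,0,0⟩, ⟨15,0,0,0⟩, ⟨-5,0,0,0⟩, ⟨-5,0,0,0⟩, ⟨-5,0,0,0⟩, ⟨-5,0,0,0⟩, ⟨-5,0,0,0⟩, ⟨0,0,0,0⟩, ⟨0,0,0,0⟩],
    ![⟨5,0,0,0⟩, ⟨5,0,0,0⟩, ⟨-5,0,0,0⟩, ⟨15,0,0,0⟩, ⟨-5,0,0,0⟩, ⟨-5,0,0,0⟩, ⟨-5,0,0,0⟩, ⟨-5,0,0,0⟩, ⟨0,0,0,0⟩, ⟨0,0,0,0⟩],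
    ![⟨5,0,0,0⟩, ⟨5,0,0,0⟩, ⟨-5,0,0,0⟩, ⟨-5,0,0,0⟩, ⟨-5,0,10,0⟩, ⟨-5,0,-10,0⟩, ⟨5,0,0,0⟩, ⟨5,0,0,0⟩, ⟨0,0,0,0⟩, ⟨0,0,0,0⟩],
    ![⟨5,0,0,0⟩, ⟨5,0,0,0⟩, ⟨-5,0,0,0⟩, ⟨-5,0,0,0⟩, ⟨-5,0,-10,0⟩, ⟨-5,0,10,0⟩, ⟨5,0,0,0⟩, ⟨5,0,0,0⟩, ⟨0,0,0,0⟩, ⟨0,0,0,0⟩],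
    ![⟨5,0,0,0⟩, ⟨5,0,0,0⟩, ⟨-5,0,0,0⟩, ⟨-5,0,0,0⟩, ⟨5,0,0,0⟩, ⟨5,0,0,0⟩, ⟨-5,0,-10,0⟩, ⟨-5,0,10,0⟩, ⟨0,0,0,0⟩, ⟨0,0,0,0⟩],
    ![⟨5,0,0,0⟩, ⟨5,0,0,0⟩, ⟨-5,0,0,0⟩, ⟨-5,0,0,0⟩, ⟨5,0,0,0⟩, ⟨5,0,0,0⟩, ⟨-5,0,10,0⟩, ⟨-5,0,-10,0⟩, ⟨0,0,0,0⟩, ⟨0,0,0,0⟩],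
    ![⟨0,4,0,0⟩, ⟨0,-4,0,0⟩, ⟨0,0,0,0⟩, ⟨0,0,0,0⟩, ⟨0,0,0,0⟩, ⟨0,0,0,0⟩, ⟨0,0,0,0⟩, ⟨0,0,0,0⟩, ⟨-10,2,0,0⟩, ⟨10,2,0,0⟩],
    ![⟨0,4,0,0⟩, ⟨0,-4,0,0⟩, ⟨0,0,0,0⟩, ⟨0,0,0,0⟩, ⟨0,0,0,0⟩, ⟨0,0,0,0⟩, ⟨0,0,0,0⟩, ⟨0,0,0,0⟩, ⟨10,2,0,0⟩, ⟨-10,2,0,0⟩]]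

/-- Integer version of `(S2D2 0 r)⁻¹`. -/
def t : Fin 10 → K :=
  ![⟨20,8,0,0⟩, ⟨20,-8,0,0⟩, ⟨4,0,0,0⟩, ⟨4,0,0,0⟩, ⟨4,0,0,0⟩, ⟨4,0,0,0⟩, ⟨4,0,0,0⟩, ⟨4,0,0,0⟩,
    ⟨0,1,0,0⟩, ⟨0,1,0,0⟩]

def u (i j k r : Fin 10) : K := Kmul (Kmul (Kmul (M i r) (M j r)) (Kconj (M k r))) (t r)

def sumK (i j k : Fin 10) : K :=
  Kadd (u i j k 0) (Kadd (u i j k 1) (Kadd (u i j k 2) (Kadd (u i j k 3) (Kadd (u i j k 4)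
    (Kadd (u i j k 5) (Kadd (u i j k 6) (Kadd (u i j k 7) (Kadd (u i j k 8) (u i j k 9)))))))))

/-- The fusion coefficients. -/
def N (i j k : Fin 10) : ℕ := ((sumK i j k).a / 8000).toNat

set_option maxHeartbeats 4000000 in
lemma key : ∀ i j k : Fin 10, sumK i j k = ⟨8000 * (N i j k : ℤ), 0, 0, 0⟩ := by decide

lemma hKt : ∀ r : Fin 10, Kmul (M 0 r) (t r) = ⟨20, 0, 0, 0⟩ := by decide

/-- The embedding of `K` into `ℂ`. -/
noncomputable def φ (x : K) : ℂ :=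
  (x.a : ℂ) + (x.b : ℂ) * (Real.sqrt 5 : ℂ) + (x.c : ℂ) * I + (x.d : ℂ) * (Real.sqrt 5 : ℂ) * I

lemma h5 : ((Real.sqrt 5 : ℝ) : ℂ) ^ 2 = 5 := by
  norm_cast
  rw [Real.sq_sqrt] <;> norm_num

lemma φ_mul (x y : K) : φ (Kmul x y) = φ x * φ y := by
  simp only [φ, Kmul]
  push_cast
  linear_combination (-((x.b:ℂ) + x.d*I) * ((y.b:ℂ) + y.d*I)) * h5
    - (((x.c:ℂ) + x.d*(Real.sqrt 5:ℂ)) * ((y.c:ℂ) + y.d*(Real.sqrt 5:ℂ))) * Complex.I_sq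
    + ((x.d:ℂ)*(y.d:ℂ)*(((Real.sqrt 5:ℝ):ℂ)^2-5))*Complex.I_sq

lemma φ_add (x y : K) : φ (Kadd x y) = φ x + φ y := by
  simp only [φ, Kadd]; push_cast; ring

lemma φ_conj (x : K) : (starRingEnd ℂ) (φ x) = φ (Kconj x) := by
  simp only [φ, Kconj, map_add, _root_.map_mul, map_intCast, Complex.conj_I, Complex.conj_ofReal]
  push_cast; ring

set_option maxHeartbeats 1000000 in
lemma entry : ∀ i r : Fin 10, S2D2 i r = (20:ℂ)⁻¹ * φ (M i r) := by
  simp only [S2D2, M, φ, Matrix.smul_apply, Matrix.of_apply, smul_eq_mul,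
    Fin.forall_iff_succ, Matrix.cons_val_zero, Matrix.cons_val_succ]
  norm_num
  exact ⟨by ring, by ring⟩

lemma sum_univ_ten {β : Type*} [AddCommMonoid β] (f : Fin 10 → β) :
    ∑ i, f i = f 0 + f 1 + f 2 + f 3 + f 4 + f 5 + f 6 + f 7 + f 8 + f 9 := by
  rw [Fin.sum_univ_castSucc, Fin.sum_univ_castSucc, Fin.sum_univ_eight]
  rfl

lemma t_mul (r : Fin 10) : S2D2 0 r * φ (t r) = 1 := by
  rw [entry, mul_assoc, ← φ_mul, hKt]
  simp [φ]

lemma S0_inv (r : Fin 10) : (S2D2 0 r)⁻¹ = φ (t r) :=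
  inv_eq_of_mul_eq_one_right (t_mul r)

/-- Verlinde formula for the S-matrix of the quantum double of the 2D2 subfactor:
every entry of the first row is nonzero, and all the Verlinde numbers
`∑_r S_{ir} S_{jr} conj(S_{kr}) / S_{1r}` are nonnegative integers. -/
theorem S2D2_verlinde :
    (∀ r : Fin 10, S2D2 0 r ≠ 0) ∧
      ∀ i j k : Fin 10, ∃ n : ℕ,
        ∑ r : Fin 10, S2D2 i r * S2D2 j r * (starRingEnd ℂ) (S2D2 k r) / S2D2 0 r
          = (n : ℂ) := by
  constructor
  · exact fun r => left_ne_zero_of_mul_eq_one (t_mul r)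
  · intro i j k
    refine ⟨N i j k, ?_⟩
    have hterm : ∀ r : Fin 10,
        S2D2 i r * S2D2 j r * (starRingEnd ℂ) (S2D2 k r) / S2D2 0 r
          = (8000:ℂ)⁻¹ * φ (u i j k r) := by
      intro r
      rw [div_eq_mul_inv, S0_inv, entry i, entry j, entry k]
      simp only [_root_.map_mul, map_inv₀, Complex.conj_ofNat, map_ofNat, φ_conj, u, φ_mul]
      ring
    calc ∑ r : Fin 10, S2D2 i r * S2D2 j r * (starRingEnd ℂ) (S2D2 k r) / S2D2 0 r
        = ∑ r : Fin 10, (8000:ℂ)⁻¹ * φ (u i j k r) :=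
          Finset.sum_congr rfl fun r _ => hterm r
      _ = (8000:ℂ)⁻¹ * φ (sumK i j k) := by
          rw [sum_univ_ten]
          simp only [sumK, φ_add]
          ring
      _ = (N i j k : ℂ) := by
          rw [key i j k]
          simp only [φ]
          push_cast
          ring

end
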